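/- arXiv:2601.07286 — 5 statements merged into one kernel-verified Lean document; each statement's English description precedes it below -/
import Mathlib

section
/- Let F be an n×n Hermitian matrix, X an n×n Hermitian matrix, and E an orthogonal projection of rank r onto a subspace spanned by eigenvectors of F corresponding to its r largest eigenvalues (counted with multiplicity). Then Tr(E[X,[X,F]]) ≥ 0. -/
open Matrix BigOperators
open scoped ComplexOrder

/-- `descSort f` lists the values of `f` in nonincreasing order:
`descSort f j` is the `j`-th largest value of `f`. -/
noncomputable def descSort {n : ℕ} (f : Fin n → ℝ) : Fin n → ℝ :=
  f ∘ Tuple.sort (fun i => -(f i))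

/-- The singular values of a complex square matrix, in nonincreasing order. -/
noncomputable def singVals {n : ℕ} (Y : Matrix (Fin n) (Fin n) ℂ) : Fin n → ℝ :=
  descSort (fun i => Real.sqrt ((Matrix.posSemidef_conjTranspose_mul_self Y).1.eigenvalues i))

/-- The orthogonal (spectral) projection onto the span of the eigenvectors of `F`
indexed by the set `s`, in an orthonormal eigenbasis of the Hermitian matrix `F`. -/
noncomputable def specProj {n : ℕ} {F : Matrix (Fin n) (Fin n) ℂ} (hF : F.IsHermitian)
    (s : Finset (Fin n)) : Matrix (Fin n) (Fin n) ℂ :=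
  (hF.eigenvectorUnitary : Matrix (Fin n) (Fin n) ℂ) *
    Matrix.diagonal (fun i => if i ∈ s then (1:ℂ) else 0) *
    (hF.eigenvectorUnitary : Matrix (Fin n) (Fin n) ℂ)ᴴ

/-- If `E` is a spectral projection of the Hermitian matrix `F` associated with its
`r` largest eigenvalues, and `X` is Hermitian, then `Tr(E[X,[X,F]]) ≥ 0`. -/
theorem trace_proj_double_comm_nonneg {n r : ℕ} {F X : Matrix (Fin n) (Fin n) ℂ}
    (hF : F.IsHermitian) (hX : X.IsHermitian) (s : Finset (Fin n)) (hs : s.card = r)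
    (hmax : ∀ i ∈ s, ∀ j ∉ s, hF.eigenvalues j ≤ hF.eigenvalues i) :
    0 ≤ (Matrix.trace (specProj hF s *
      (X * (X * F - F * X) - (X * F - F * X) * X))).re := by
  classical
  set U : Matrix (Fin n) (Fin n) ℂ := (hF.eigenvectorUnitary : Matrix (Fin n) (Fin n) ℂ) with hUdef
  have hU1 : Uᴴ * U = 1 := by
    simpa [Matrix.star_eq_conjTranspose] using
      (Matrix.mem_unitaryGroup_iff'.mp hF.eigenvectorUnitary.2)
  have hU2 : U * Uᴴ = 1 := by
    simpa [Matrix.star_eq_conjTranspose] using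
      (Matrix.mem_unitaryGroup_iff.mp hF.eigenvectorUnitary.2)
  set d : Fin n → ℝ := hF.eigenvalues with hddef
  set D : Matrix (Fin n) (Fin n) ℂ := Matrix.diagonal (fun i => (d i : ℂ)) with hDdef
  set Y : Matrix (Fin n) (Fin n) ℂ := Uᴴ * X * U with hYdef
  have c1 : ∀ M : Matrix (Fin n) (Fin n) ℂ, U * (Uᴴ * M) = M := by
    intro M; rw [← Matrix.mul_assoc, hU2, Matrix.one_mul]
  have c2 : ∀ M : Matrix (Fin n) (Fin n) ℂ, Uᴴ * (U * M) = M := by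
    intro M; rw [← Matrix.mul_assoc, hU1, Matrix.one_mul]
  have hX' : X = U * Y * Uᴴ := by
    rw [hYdef]
    simp only [Matrix.mul_assoc, hU2, Matrix.mul_one, c2, c1]
  have hF' : F = U * D * Uᴴ := by
    have := hF.spectral_theorem
    rw [Unitary.conjStarAlgAut_apply, Matrix.star_eq_conjTranspose] at this
    convert this using 3 <;> rfl
  have hYH : Y.IsHermitian := by
    show Yᴴ = Y
    rw [hYdef]
    simp only [Matrix.conjTranspose_mul, Matrix.conjTranspose_conjTranspose, hX.eq]
    rw [Matrix.mul_assoc]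
  -- conjugate the inner matrix
  have hM : Uᴴ * (X * (X * F - F * X) - (X * F - F * X) * X) * U
      = Y * (Y * D - D * Y) - (Y * D - D * Y) * Y := by
    rw [hX', hF']
    simp only [Matrix.mul_sub, Matrix.sub_mul, Matrix.mul_assoc, c1, c2, hU1, hU2,
      Matrix.mul_one, Matrix.one_mul]
  set P : Matrix (Fin n) (Fin n) ℂ :=
    Matrix.diagonal (fun i => if i ∈ s then (1:ℂ) else 0) with hPdef
  have htr : Matrix.trace (specProj hF s *
      (X * (X * F - F * X) - (X * F - F * X) * X))
      = Matrix.trace (P * (Y * (Y * D - D * Y) - (Y * D - D * Y) * Y)) := by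
    rw [← hM]
    show Matrix.trace ((U * P * Uᴴ) * _) = _
    rw [Matrix.trace_mul_cycle' P (Uᴴ * (X * (X * F - F * X) - (X * F - F * X) * X)) U,
      Matrix.mul_assoc, Matrix.mul_assoc]
  rw [htr]
  -- compute the trace as a double sum of reals
  have hC : ∀ i j, (Y * D - D * Y) i j = Y i j * (((d j : ℂ)) - (d i : ℂ)) := by
    intro i j
    simp only [Matrix.sub_apply, hDdef, Matrix.mul_diagonal, Matrix.diagonal_mul]
    ring
  have key : (Matrix.trace (P * (Y * (Y * D - D * Y) - (Y * D - D * Y) * Y))).re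
      = ∑ i ∈ s, ∑ j, Complex.normSq (Y i j) * (2 * (d i - d j)) := by
    have h1 : Matrix.trace (P * (Y * (Y * D - D * Y) - (Y * D - D * Y) * Y))
        = ∑ i, (if i ∈ s then (1:ℂ) else 0) *
            (∑ j, (Y i j * ((Y * D - D * Y) j i) - ((Y * D - D * Y) i j) * Y j i)) := by
      rw [Matrix.trace]
      apply Finset.sum_congr rfl
      intro i _
      rw [Matrix.diag_apply, hPdef, Matrix.diagonal_mul]
      congr 1
      simp only [Matrix.sub_apply, Matrix.mul_apply]
      rw [← Finset.sum_sub_distrib]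
    rw [h1]
    rw [Complex.re_sum]
    have hsim := Finset.sum_ite_mem Finset.univ s
      (fun i => ∑ j, Complex.normSq (Y i j) * (2 * (d i - d j)))
    rw [Finset.univ_inter] at hsim
    rw [← hsim]
    apply Finset.sum_congr rfl
    intro i _
    by_cases hi : i ∈ s
    · simp only [hi, if_true, one_mul]
      rw [Complex.re_sum]
      apply Finset.sum_congr rfl
      intro j _
      rw [hC, hC, ← hYH.apply i j]
      simp only [Complex.sub_re, Complex.mul_re, Complex.mul_im, Complex.sub_im,
        Complex.ofReal_re, Complex.ofReal_im, Complex.normSq_apply,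
        RCLike.star_def, Complex.conj_re, Complex.conj_im]
      ring
    · simp [hi]
  rw [key]
  -- split the inner sum over `s` and its complement
  have hsplit : ∀ i : Fin n, (∑ j, Complex.normSq (Y i j) * (2 * (d i - d j)))
      = (∑ j ∈ s, Complex.normSq (Y i j) * (2 * (d i - d j)))
        + ∑ j ∈ sᶜ, Complex.normSq (Y i j) * (2 * (d i - d j)) :=
    fun i => (Finset.sum_add_sum_compl s _).symm
  rw [Finset.sum_congr rfl fun i _ => hsplit i, Finset.sum_add_distrib]
  have hsym : ∑ i ∈ s, ∑ j ∈ s, Complex.normSq (Y i j) * (2 * (d i - d j)) = 0 := by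
    have hcs : ∀ i j, Complex.normSq (Y j i) = Complex.normSq (Y i j) := by
      intro i j
      rw [← hYH.apply i j]
      simp [RCLike.star_def, Complex.normSq_conj]
    have h2 : (∑ i ∈ s, ∑ j ∈ s, Complex.normSq (Y i j) * (2 * (d i - d j)))
        = - ∑ i ∈ s, ∑ j ∈ s, Complex.normSq (Y i j) * (2 * (d i - d j)) := by
      nth_rewrite 1 [Finset.sum_comm]
      rw [← Finset.sum_neg_distrib]
      apply Finset.sum_congr rfl
      intro i _
      rw [← Finset.sum_neg_distrib]
      apply Finset.sum_congr rfl
      intro j _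
      rw [hcs]
      ring
    linarith
  rw [hsym, zero_add]
  apply Finset.sum_nonneg
  intro i hi
  apply Finset.sum_nonneg
  intro j hj
  have hij : d j ≤ d i := hmax i hi j (Finset.mem_compl.mp hj)
  have := Complex.normSq_nonneg (Y i j)
  nlinarith
end

section
/- Let A, B be n×n Hermitian matrices, H = A + B, X = A - B, Q₃ = A³ + 3A²B + 3AB² + B³, and R₃ = (Q₃ + Q₃*)/2. Then R₃ - H³ = (1/4)[X,[X,H]]. -/
open Matrix BigOperators
open scoped ComplexOrder

/-- The cubic identity `R₃ - H³ = (1/4)[X,[X,H]]`. -/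
theorem cubic_commutator_identity {n : ℕ} (A B : Matrix (Fin n) (Fin n) ℂ)
    (hA : A.IsHermitian) (hB : B.IsHermitian) :
    (1 / 2 : ℂ) • ((A ^ 3 + (3 : ℂ) • (A ^ 2 * B) + (3 : ℂ) • (A * B ^ 2) + B ^ 3)
        + (A ^ 3 + (3 : ℂ) • (A ^ 2 * B) + (3 : ℂ) • (A * B ^ 2) + B ^ 3)ᴴ)
      - (A + B) ^ 3
    = (1 / 4 : ℂ) •
        ((A - B) * ((A - B) * (A + B) - (A + B) * (A - B))
          - ((A - B) * (A + B) - (A + B) * (A - B)) * (A - B)) := by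
  simp only [conjTranspose_add, conjTranspose_smul, conjTranspose_mul,
    conjTranspose_pow, hA.eq, hB.eq, Complex.star_def, Complex.conj_ofNat]
  apply smul_right_injective (Matrix (Fin n) (Fin n) ℂ) (show (4:ℂ) ≠ 0 by norm_num)
  simp only [smul_sub, smul_add, smul_smul]
  norm_num
  noncomm_ring
  module
end

section
/- Let A, B be n×n Hermitian matrices, H = A + B, Q₃ = A³ + 3A²B + 3AB² + B³. Then the eigenvalue vector of H³ is majorized by the eigenvalue vector of Re Q₃ = (Q₃ + Q₃*)/2: the partial sums of the r largest eigenvalues of H³ are at most those of Re Q₃ for every r, with equality of total sums. -/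
open Matrix BigOperators Polynomial
open scoped ComplexOrder

section Aux

lemma descSort_antitone {n : ℕ} (f : Fin n → ℝ) : Antitone (descSort f) := by
  intro i j hij
  have := Tuple.monotone_sort (fun i => -(f i)) hij
  simpa [descSort] using this

lemma descSort_multiset {n : ℕ} (f : Fin n → ℝ) :
    Multiset.map (descSort f) Finset.univ.val = Multiset.map f Finset.univ.val := by
  have h0 : Multiset.map (⇑(Tuple.sort (fun i => -(f i)))) Finset.univ.val
      = Finset.univ.val := by
    have := congrArg Finset.val (Finset.map_univ_equiv
      (Tuple.sort (fun i => -(f i))))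
    simpa [Finset.map] using this
  calc Multiset.map (descSort f) Finset.univ.val
      = Multiset.map f (Multiset.map (⇑(Tuple.sort (fun i => -(f i)))) Finset.univ.val) := by
        rw [Multiset.map_map]; rfl
    _ = Multiset.map f Finset.univ.val := by rw [h0]

lemma descSort_congr {n : ℕ} {f g : Fin n → ℝ}
    (h : Multiset.map f Finset.univ.val = Multiset.map g Finset.univ.val) :
    descSort f = descSort g := by
  apply List.ofFn_injective (α := ℝ)
  have hperm : (List.ofFn (descSort f)).Perm (List.ofFn (descSort g)) := by
    rw [← Multiset.coe_eq_coe]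
    have h1 := descSort_multiset f
    have h2 := descSort_multiset g
    rw [Fin.univ_val_map, Fin.univ_val_map] at h1 h2
    rw [Fin.univ_val_map, Fin.univ_val_map] at h
    exact h1.trans (h.trans h2.symm)
  refine List.Perm.eq_of_pairwise (le := fun a b : ℝ => b ≤ a) (fun a b _ _ h1 h2 => le_antisymm h2 h1) ?_ ?_ hperm
  · exact List.pairwise_ofFn.mpr (fun i j hij => (descSort_antitone f) hij.le)
  · exact List.pairwise_ofFn.mpr (fun i j hij => (descSort_antitone g) hij.le)

lemma descSort_sum {n : ℕ} (f : Fin n → ℝ) : ∑ j, descSort f j = ∑ j, f j := by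
  rw [Finset.sum_eq_multiset_sum, Finset.sum_eq_multiset_sum]
  exact congrArg Multiset.sum (descSort_multiset f)

lemma descSort_cube {n : ℕ} (d : Fin n → ℝ) :
    descSort (fun i => d i ^ 3) =
      fun j => d (Tuple.sort (fun i => -(d i)) j) ^ 3 := by
  set σ := Tuple.sort (fun i => -(d i)) with hσ
  have hmono : Monotone ((fun i => -(d i ^ 3)) ∘ σ) := by
    intro i j hij
    have h1 : -(d (σ i)) ≤ -(d (σ j)) := Tuple.monotone_sort (fun i => -(d i)) hij
    have h2 : d (σ j) ≤ d (σ i) := by linarith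
    have h3 : d (σ j) ^ 3 ≤ d (σ i) ^ 3 :=
      (Odd.strictMono_pow (by decide : Odd 3)).monotone h2
    simp only [Function.comp_apply]
    linarith
  have hkey := (Tuple.comp_sort_eq_comp_iff_monotone
    (f := fun i => -(d i ^ 3)) (σ := σ)).mpr hmono
  funext j
  have hj := congrFun hkey j
  simp only [Function.comp_apply] at hj
  have h4 : d (Tuple.sort (fun i => -(d i ^ 3)) j) ^ 3 = d (σ j) ^ 3 := by linarith
  simpa [descSort] using h4

lemma card_filter_lt {n r : ℕ} (hr : r ≤ n) :
    (Finset.univ.filter (fun j : Fin n => (j : ℕ) < r)).card = r := by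
  have : (Finset.univ.filter (fun j : Fin n => (j : ℕ) < r)) =
      Finset.map ⟨Fin.castLE hr, Fin.castLE_injective hr⟩ Finset.univ := by
    ext j
    simp only [Finset.mem_filter, Finset.mem_univ, true_and, Finset.mem_map,
      Function.Embedding.coeFn_mk]
    constructor
    · intro hj; exact ⟨⟨j, hj⟩, rfl⟩
    · rintro ⟨a, rfl⟩; exact a.2
  rw [this, Finset.card_map]; simp

lemma kyfan_scalar {n r : ℕ} (hr : r ≤ n) (e s : Fin n → ℝ) (he : Antitone e)
    (hs0 : ∀ i, 0 ≤ s i) (hs1 : ∀ i, s i ≤ 1) (hsum : ∑ i, s i = (r : ℝ)) :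
    ∑ i, e i * s i ≤ ∑ j ∈ Finset.univ.filter (fun j : Fin n => (j : ℕ) < r), e j := by
  rcases Nat.eq_zero_or_pos r with hr0 | hrpos
  · subst hr0
    have hz : ∀ i, s i = 0 := by
      intro i
      have := Finset.sum_eq_zero_iff_of_nonneg (fun i _ => hs0 i) |>.mp (by simpa using hsum)
      exact this i (Finset.mem_univ i)
    simp [hz]
  · have hrn : r - 1 < n := by omega
    set m := e ⟨r - 1, hrn⟩ with hm
    set F := Finset.univ.filter (fun j : Fin n => (j : ℕ) < r) with hF
    set F' := Finset.univ.filter (fun j : Fin n => ¬ ((j : ℕ) < r)) with hF'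
    have hsplit : ∑ i, e i * s i = ∑ i ∈ F, e i * s i + ∑ i ∈ F', e i * s i :=
      (Finset.sum_filter_add_sum_filter_not _ _ _).symm
    have hssplit : ∑ i ∈ F, s i + ∑ i ∈ F', s i = (r : ℝ) := by
      rw [Finset.sum_filter_add_sum_filter_not]; exact hsum
    have h1 : ∑ i ∈ F, e i * s i ≤ ∑ i ∈ F, (e i + m * (s i - 1)) := by
      apply Finset.sum_le_sum
      intro i hi
      have hiF : (i : ℕ) < r := (Finset.mem_filter.mp hi).2
      have hme : m ≤ e i := he (by simp [Fin.le_def]; omega)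
      have : e i * (s i - 1) ≤ m * (s i - 1) :=
        mul_le_mul_of_nonpos_right hme (by linarith [hs1 i])
      nlinarith
    have h2 : ∑ i ∈ F', e i * s i ≤ ∑ i ∈ F', m * s i := by
      apply Finset.sum_le_sum
      intro i hi
      have hiF : ¬ ((i : ℕ) < r) := (Finset.mem_filter.mp hi).2
      have hme : e i ≤ m := he (by simp [Fin.le_def]; omega)
      exact mul_le_mul_of_nonneg_right hme (hs0 i)
    have hcard : F.card = r := by
      rw [hF]; exact card_filter_lt hr
    have hFsum : ∑ i ∈ F, (e i + m * (s i - 1)) =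
        ∑ i ∈ F, e i + m * (∑ i ∈ F, s i) - m * r := by
      rw [Finset.sum_add_distrib, Finset.mul_sum]
      have : ∑ i ∈ F, m * (s i - 1) = ∑ i ∈ F, (m * s i - m) := by
        congr 1; funext i; ring
      rw [this, Finset.sum_sub_distrib, Finset.sum_const, hcard]
      ring
    have hF'sum : ∑ i ∈ F', m * s i = m * ∑ i ∈ F', s i := (Finset.mul_sum _ _ _).symm
    calc ∑ i, e i * s i = ∑ i ∈ F, e i * s i + ∑ i ∈ F', e i * s i := hsplit
      _ ≤ (∑ i ∈ F, e i + m * (∑ i ∈ F, s i) - m * r) + m * ∑ i ∈ F', s i := by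
          rw [← hFsum, ← hF'sum]; exact add_le_add h1 h2
      _ = ∑ i ∈ F, e i + m * ((∑ i ∈ F, s i + ∑ i ∈ F', s i) - r) := by ring
      _ = ∑ i ∈ F, e i := by rw [hssplit]; ring

lemma det_smul_one_sub {n : ℕ} (U : Matrix (Fin n) (Fin n) ℂ)
    (hU2 : U * star U = 1) (c : Fin n → ℝ) (z : ℂ) :
    Matrix.det (z • (1 : Matrix (Fin n) (Fin n) ℂ)
      - U * Matrix.diagonal (fun i => (c i : ℂ)) * star U) = ∏ i, (z - (c i : ℂ)) := by
  have h1 : z • (1 : Matrix (Fin n) (Fin n) ℂ)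
      - U * Matrix.diagonal (fun i => (c i : ℂ)) * star U
      = U * (Matrix.diagonal (fun i => z - (c i : ℂ))) * star U := by
    have hdiag : Matrix.diagonal (fun i => z - (c i : ℂ))
        = z • (1 : Matrix (Fin n) (Fin n) ℂ) - Matrix.diagonal (fun i => (c i : ℂ)) := by
      ext i j
      by_cases h : i = j <;>
        simp [Matrix.diagonal_apply, Matrix.one_apply, h, Matrix.sub_apply]
    rw [hdiag, Matrix.mul_sub, Matrix.sub_mul]
    congr 1
    rw [mul_smul_comm, Matrix.mul_one, smul_mul_assoc, hU2]
  have hdet : Matrix.det U * Matrix.det (star U) = 1 := by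
    rw [← Matrix.det_mul, hU2, Matrix.det_one]
  rw [h1, Matrix.det_mul, Matrix.det_mul, Matrix.det_diagonal]
  linear_combination (∏ i, (z - (c i : ℂ))) * hdet

lemma eig_multiset {n : ℕ} {M : Matrix (Fin n) (Fin n) ℂ} (hM : M.IsHermitian)
    (U : Matrix (Fin n) (Fin n) ℂ) (hU2 : U * star U = 1)
    (c : Fin n → ℝ) (h : M = U * Matrix.diagonal (fun i => (c i : ℂ)) * star U) :
    Multiset.map hM.eigenvalues Finset.univ.val = Multiset.map c Finset.univ.val := by
  set V : Matrix (Fin n) (Fin n) ℂ := (hM.eigenvectorUnitary : Matrix (Fin n) (Fin n) ℂ) with hV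
  have hV2 : V * star V = 1 := Matrix.mem_unitaryGroup_iff.mp hM.eigenvectorUnitary.2
  have hspec : M = V * Matrix.diagonal (fun i => (hM.eigenvalues i : ℂ)) * star V :=
    hM.spectral_theorem
  have heval : ∀ z : ℂ, ∏ i, (z - (c i : ℂ)) = ∏ i, (z - (hM.eigenvalues i : ℂ)) := by
    intro z
    rw [← det_smul_one_sub U hU2 c z, ← det_smul_one_sub V hV2 hM.eigenvalues z, ← h, ← hspec]
  have hpoly : (∏ i, (X - C ((c i : ℂ)))) = ∏ i, (X - C ((hM.eigenvalues i : ℂ))) := by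
    apply Polynomial.funext
    intro z
    simpa [Polynomial.eval_prod] using heval z
  have hroots := congrArg Polynomial.roots hpoly
  rw [show (∏ i, (X - C ((c i : ℂ)))) =
      ((Finset.univ.val.map (fun i => (c i : ℂ))).map (fun a => X - C a)).prod by
    rw [Multiset.map_map]; rfl] at hroots
  rw [show (∏ i, (X - C ((hM.eigenvalues i : ℂ)))) =
      ((Finset.univ.val.map (fun i => (hM.eigenvalues i : ℂ))).map (fun a => X - C a)).prod by
    rw [Multiset.map_map]; rfl] at hroots
  rw [Polynomial.roots_multiset_prod_X_sub_C, Polynomial.roots_multiset_prod_X_sub_C] at hroots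
  apply Multiset.map_injective (Complex.ofReal_injective)
  rw [Multiset.map_map, Multiset.map_map]
  exact hroots.symm

lemma reQ3_identity {n : ℕ} (A B : Matrix (Fin n) (Fin n) ℂ)
    (hA : A.IsHermitian) (hB : B.IsHermitian) :
    (1 / 2 : ℂ) • ((A ^ 3 + (3 : ℂ) • (A ^ 2 * B) + (3 : ℂ) • (A * B ^ 2) + B ^ 3)
        + (A ^ 3 + (3 : ℂ) • (A ^ 2 * B) + (3 : ℂ) • (A * B ^ 2) + B ^ 3)ᴴ)
      = (A + B) ^ 3 + (A * (A * (A + B) - (A + B) * A) - (A * (A + B) - (A + B) * A) * A)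
        - (1 / 2 : ℂ) • ((A + B) * (A * (A + B) - (A + B) * A)
            - (A * (A + B) - (A + B) * A) * (A + B)) := by
  have hQconj : (A ^ 3 + (3 : ℂ) • (A ^ 2 * B) + (3 : ℂ) • (A * B ^ 2) + B ^ 3)ᴴ
      = A ^ 3 + (3 : ℂ) • (B * A ^ 2) + (3 : ℂ) • (B ^ 2 * A) + B ^ 3 := by
    simp [Matrix.conjTranspose_add, Matrix.conjTranspose_smul, Matrix.conjTranspose_mul,
      Matrix.conjTranspose_pow, hA.eq, hB.eq]
  apply smul_right_injective (Matrix (Fin n) (Fin n) ℂ) (two_ne_zero (α := ℂ))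
  beta_reduce
  rw [smul_smul, smul_sub, smul_add, smul_smul,
    show (2:ℂ) * (1/2) = 1 by norm_num, one_smul, one_smul, hQconj]
  have h3 : ∀ M : Matrix (Fin n) (Fin n) ℂ, (3 : ℂ) • M = M + M + M := fun M => by
    rw [show (3:ℂ) = 1 + 1 + 1 by norm_num, add_smul, add_smul, one_smul]
  rw [h3, h3, h3, h3, one_smul]
  noncomm_ring
  module

end Aux

set_option maxHeartbeats 2000000 in
/-- `λ(H³) ≺ λ(Re Q₃)`: weak majorization of partial sums plus equality of total sums. -/
theorem eig_cube_majorized_by_eig_reQ3 {n : ℕ} (A B : Matrix (Fin n) (Fin n) ℂ)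
    (hA : A.IsHermitian) (hB : B.IsHermitian)
    (hH3 : ((A + B) ^ 3).IsHermitian)
    (hR3 : ((1 / 2 : ℂ) •
        ((A ^ 3 + (3 : ℂ) • (A ^ 2 * B) + (3 : ℂ) • (A * B ^ 2) + B ^ 3)
          + (A ^ 3 + (3 : ℂ) • (A ^ 2 * B) + (3 : ℂ) • (A * B ^ 2) + B ^ 3)ᴴ)).IsHermitian) :
    (∀ r : ℕ, r ≤ n →
        ∑ j ∈ Finset.univ.filter (fun j : Fin n => (j : ℕ) < r), descSort hH3.eigenvalues j ≤
          ∑ j ∈ Finset.univ.filter (fun j : Fin n => (j : ℕ) < r), descSort hR3.eigenvalues j)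
    ∧ ∑ j : Fin n, descSort hH3.eigenvalues j = ∑ j : Fin n, descSort hR3.eigenvalues j := by
  classical
  have hH : (A + B).IsHermitian := hA.add hB
  set H := A + B with hHdef
  set Q := A ^ 3 + (3 : ℂ) • (A ^ 2 * B) + (3 : ℂ) • (A * B ^ 2) + B ^ 3 with hQdef
  set R := (1 / 2 : ℂ) • (Q + Qᴴ) with hRdef
  set d := hH.eigenvalues with hd
  set U : Matrix (Fin n) (Fin n) ℂ := (hH.eigenvectorUnitary : Matrix (Fin n) (Fin n) ℂ) with hU
  have hU1 : star U * U = 1 := Matrix.mem_unitaryGroup_iff'.mp hH.eigenvectorUnitary.2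
  have hU2 : U * star U = 1 := Matrix.mem_unitaryGroup_iff.mp hH.eigenvectorUnitary.2
  have hspecH : H = U * Matrix.diagonal (fun i => (d i : ℂ)) * star U := hH.spectral_theorem
  set μ := hR3.eigenvalues with hμ
  set V : Matrix (Fin n) (Fin n) ℂ := (hR3.eigenvectorUnitary : Matrix (Fin n) (Fin n) ℂ) with hV
  have hV1 : star V * V = 1 := Matrix.mem_unitaryGroup_iff'.mp hR3.eigenvectorUnitary.2
  have hV2 : V * star V = 1 := Matrix.mem_unitaryGroup_iff.mp hR3.eigenvectorUnitary.2
  have hspecR : R = V * Matrix.diagonal (fun i => (μ i : ℂ)) * star V := hR3.spectral_theorem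
  have hcanU : ∀ Z : Matrix (Fin n) (Fin n) ℂ, star U * (U * Z) = Z := fun Z => by
    rw [← Matrix.mul_assoc, hU1, Matrix.one_mul]
  have hcanU' : ∀ Z : Matrix (Fin n) (Fin n) ℂ, U * (star U * Z) = Z := fun Z => by
    rw [← Matrix.mul_assoc, hU2, Matrix.one_mul]
  -- diagonalization of H ^ 3
  have hH3spec : H ^ 3 = U * Matrix.diagonal (fun i => ((d i ^ 3 : ℝ) : ℂ)) * star U := by
    have hdd : Matrix.diagonal (fun i => (d i : ℂ)) * Matrix.diagonal (fun i => (d i : ℂ)) *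
        Matrix.diagonal (fun i => (d i : ℂ)) = Matrix.diagonal (fun i => ((d i ^ 3 : ℝ) : ℂ)) := by
      rw [Matrix.diagonal_mul_diagonal, Matrix.diagonal_mul_diagonal]
      congr 1; funext i; push_cast; ring
    rw [show H ^ 3 = H * H * H by rw [pow_succ, pow_succ, pow_one], hspecH, ← hdd]
    simp only [Matrix.mul_assoc, hcanU]
  have hdesc3 : descSort hH3.eigenvalues = descSort (fun i => d i ^ 3) :=
    descSort_congr (eig_multiset hH3 U hU2 (fun i => d i ^ 3) hH3spec)
  -- the commutator identity
  set CA := A * H - H * A with hCA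
  have hRid : R = H ^ 3 + (A * CA - CA * A) - (1 / 2 : ℂ) • (H * CA - CA * H) := by
    rw [hRdef, hQdef, hCA, hHdef]
    exact reQ3_identity A B hA hB
  set X := star U * A * U with hXdef
  have hXherm : X.IsHermitian := by
    show Xᴴ = X
    rw [hXdef]
    simp [Matrix.conjTranspose_mul, Matrix.star_eq_conjTranspose, hA.eq, Matrix.mul_assoc]
  set DC := Matrix.diagonal (fun i => (d i : ℂ)) with hDC
  set CX := X * DC - DC * X with hCXdef
  set T := star U * R * U with hTdef
  have hDH : star U * H * U = DC := by
    rw [hspecH]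
    simp only [Matrix.mul_assoc, hcanU]
    rw [hU1, Matrix.mul_one]
  have hconj_mul : ∀ M N : Matrix (Fin n) (Fin n) ℂ,
      star U * (M * N) * U = (star U * M * U) * (star U * N * U) := by
    intro M N
    simp only [Matrix.mul_assoc, hcanU']
  have hadd : ∀ M N : Matrix (Fin n) (Fin n) ℂ,
      star U * (M + N) * U = star U * M * U + star U * N * U := by
    intro M N; rw [Matrix.mul_add, Matrix.add_mul]
  have hsub : ∀ M N : Matrix (Fin n) (Fin n) ℂ,
      star U * (M - N) * U = star U * M * U - star U * N * U := by
    intro M N; rw [Matrix.mul_sub, Matrix.sub_mul]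
  have hsmul : ∀ (z : ℂ) (M : Matrix (Fin n) (Fin n) ℂ),
      star U * (z • M) * U = z • (star U * M * U) := by
    intro z M; rw [mul_smul_comm, smul_mul_assoc]
  have hH3c : star U * H ^ 3 * U = Matrix.diagonal (fun i => ((d i ^ 3 : ℝ) : ℂ)) := by
    rw [hH3spec]
    simp only [Matrix.mul_assoc, hcanU]
    rw [hU1, Matrix.mul_one]
  have hCAc : star U * CA * U = CX := by
    rw [hCA, hCXdef, hsub, hconj_mul, hconj_mul, hDH, ← hXdef]
  have hTid : T = Matrix.diagonal (fun i => ((d i ^ 3 : ℝ) : ℂ)) + (X * CX - CX * X)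
      - (1 / 2 : ℂ) • (DC * CX - CX * DC) := by
    rw [hTdef, hRid]
    rw [hsub, hadd, hsub, hsmul, hsub, hconj_mul, hconj_mul, hconj_mul, hconj_mul,
      hH3c, hCAc, hDH, ← hXdef]
  -- entrywise formula from the commutator identity
  have hCXapply : ∀ a b, CX a b = X a b * (d b : ℂ) - (d a : ℂ) * X a b := by
    intro a b
    rw [hCXdef]
    simp [Matrix.sub_apply, Matrix.mul_diagonal, Matrix.diagonal_mul, hDC]
  have hXconj : ∀ a b, X b a = (starRingEnd ℂ) (X a b) := by
    intro a b
    conv_lhs => rw [← hXherm.eq]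
    simp [Matrix.conjTranspose_apply, Complex.star_def]
  have hTform2 : ∀ k, T k k = ((d k ^ 3 : ℝ) : ℂ)
      + ∑ j, ((2 * Complex.normSq (X k j) * (d k - d j) : ℝ) : ℂ) := by
    intro k
    rw [hTid]
    simp only [Matrix.add_apply, Matrix.sub_apply, Matrix.smul_apply, Matrix.diagonal_apply_eq]
    have hbr : (DC * CX) k k - (CX * DC) k k = 0 := by
      rw [Matrix.diagonal_mul (d := fun i => (d i : ℂ)), Matrix.mul_diagonal]
      ring
    have hmain : (X * CX) k k - (CX * X) k k
        = ∑ j, ((2 * Complex.normSq (X k j) * (d k - d j) : ℝ) : ℂ) := by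
      rw [Matrix.mul_apply, Matrix.mul_apply, ← Finset.sum_sub_distrib]
      apply Finset.sum_congr rfl
      intro j _
      rw [hCXapply, hCXapply, hXconj k j]
      have hc := Complex.mul_conj (X k j)
      push_cast
      linear_combination (2 * (d k : ℂ) - 2 * (d j : ℂ)) * hc
    rw [hmain, hbr, smul_zero, sub_zero]
  -- the W matrix and second formula
  set W := star U * V with hWdef
  have hstarW : star W = star V * U := by
    rw [hWdef, Matrix.star_mul, star_star]
  have hTW : T = W * Matrix.diagonal (fun i => (μ i : ℂ)) * star W := by
    rw [hTdef, hspecR, hstarW, hWdef]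
    simp only [Matrix.mul_assoc]
  have hTform1 : ∀ k, T k k = ∑ i, ((μ i * Complex.normSq (W k i) : ℝ) : ℂ) := by
    intro k
    rw [hTW, Matrix.mul_apply]
    apply Finset.sum_congr rfl
    intro i _
    rw [Matrix.mul_diagonal, Matrix.star_apply, RCLike.star_def]
    push_cast
    linear_combination ((μ i : ℂ)) * Complex.mul_conj (W k i)
  have hreal : ∀ k, ∑ i, μ i * Complex.normSq (W k i)
      = d k ^ 3 + ∑ j, 2 * Complex.normSq (X k j) * (d k - d j) := by
    intro k
    have h := (hTform1 k).symm.trans (hTform2 k)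
    exact_mod_cast h
  -- unitarity of W
  have hWW1 : star W * W = 1 := by
    rw [hstarW, hWdef]
    calc star V * U * (star U * V) = star V * (U * (star U * V)) := by rw [Matrix.mul_assoc]
      _ = star V * V := by rw [hcanU']
      _ = 1 := hV1
  have hWW2 : W * star W = 1 := by
    rw [hstarW, hWdef]
    calc star U * V * (star V * U) = star U * (V * (star V * U)) := by rw [Matrix.mul_assoc]
      _ = star U * ((V * star V) * U) := by rw [Matrix.mul_assoc]
      _ = star U * U := by rw [hV2, Matrix.one_mul]
      _ = 1 := hU1
  have hcol : ∀ i, ∑ k, Complex.normSq (W k i) = 1 := by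
    intro i
    have h := congrFun (congrFun hWW1 i) i
    rw [Matrix.mul_apply, Matrix.one_apply_eq] at h
    have h2 : ∑ k, ((Complex.normSq (W k i) : ℝ) : ℂ) = 1 := by
      rw [← h]
      apply Finset.sum_congr rfl
      intro k _
      rw [Matrix.star_apply, RCLike.star_def]
      linear_combination -Complex.mul_conj (W k i)
    exact_mod_cast h2
  have hrow : ∀ k, ∑ i, Complex.normSq (W k i) = 1 := by
    intro k
    have h := congrFun (congrFun hWW2 k) k
    rw [Matrix.mul_apply, Matrix.one_apply_eq] at h
    have h2 : ∑ i, ((Complex.normSq (W k i) : ℝ) : ℂ) = 1 := by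
      rw [← h]
      apply Finset.sum_congr rfl
      intro i _
      rw [Matrix.star_apply, RCLike.star_def]
      linear_combination -Complex.mul_conj (W k i)
    exact_mod_cast h2
  have hXsym : ∀ k j, Complex.normSq (X k j) = Complex.normSq (X j k) := by
    intro k j
    rw [hXconj k j, Complex.normSq_conj]
  -- total sums
  have hzero : ∑ k, ∑ j, 2 * Complex.normSq (X k j) * (d k - d j) = 0 := by
    have hcomm : ∑ k, ∑ j, 2 * Complex.normSq (X k j) * (d k - d j)
        = ∑ j, ∑ k, 2 * Complex.normSq (X k j) * (d k - d j) := Finset.sum_comm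
    have hneg : ∑ j, ∑ k, 2 * Complex.normSq (X k j) * (d k - d j)
        = - ∑ k, ∑ j, 2 * Complex.normSq (X k j) * (d k - d j) := by
      rw [← Finset.sum_neg_distrib]
      apply Finset.sum_congr rfl
      intro k _
      rw [← Finset.sum_neg_distrib]
      apply Finset.sum_congr rfl
      intro j _
      rw [hXsym k j]
      ring
    linarith [hcomm.trans hneg]
  have htot : ∑ i, μ i = ∑ k, d k ^ 3 := by
    have h1 : ∑ k, ∑ i, μ i * Complex.normSq (W k i)
        = ∑ k, (d k ^ 3 + ∑ j, 2 * Complex.normSq (X k j) * (d k - d j)) :=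
      Finset.sum_congr rfl (fun k _ => hreal k)
    rw [Finset.sum_add_distrib, hzero, add_zero] at h1
    rw [← h1, Finset.sum_comm]
    apply Finset.sum_congr rfl
    intro i _
    rw [← Finset.mul_sum, hcol, mul_one]
  constructor
  · -- partial sums
    intro r hr
    set σ := Tuple.sort (fun i => -(d i)) with hσ
    set p : Fin n → ℝ := fun k => if ((σ.symm k : Fin n) : ℕ) < r then 1 else 0 with hp
    have hp01 : ∀ k, 0 ≤ p k ∧ p k ≤ 1 := by
      intro k
      rw [hp]
      beta_reduce
      by_cases h1 : ((σ.symm k : Fin n) : ℕ) < r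
      · rw [if_pos h1]; norm_num
      · rw [if_neg h1]; norm_num
    have hpmono : ∀ k j, 0 ≤ (p k - p j) * (d k - d j) := by
      intro k j
      rw [hp]
      beta_reduce
      by_cases h1 : ((σ.symm k : Fin n) : ℕ) < r <;> by_cases h2 : ((σ.symm j : Fin n) : ℕ) < r
      · rw [if_pos h1, if_pos h2]; simp
      · rw [if_pos h1, if_neg h2]
        have hle : σ.symm k ≤ σ.symm j := by
          rw [Fin.le_def]; omega
        have hm := Tuple.monotone_sort (fun i => -(d i)) hle
        rw [← hσ] at hm
        simp only [Function.comp_apply, Equiv.apply_symm_apply] at hm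
        nlinarith [hm]
      · rw [if_neg h1, if_pos h2]
        have hle : σ.symm j ≤ σ.symm k := by
          rw [Fin.le_def]; omega
        have hm := Tuple.monotone_sort (fun i => -(d i)) hle
        rw [← hσ] at hm
        simp only [Function.comp_apply, Equiv.apply_symm_apply] at hm
        nlinarith [hm]
      · rw [if_neg h1, if_neg h2]; simp
    have hpσ : ∀ j, p (σ j) = if (j : ℕ) < r then (1:ℝ) else 0 := by
      intro j
      simp only [hp, Equiv.symm_apply_apply]
    have hpsum : ∑ k, p k = (r : ℝ) := by
      calc ∑ k, p k = ∑ j, p (σ j) := (Equiv.sum_comp σ p).symm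
        _ = ∑ j : Fin n, (if (j : ℕ) < r then (1:ℝ) else 0) :=
            Finset.sum_congr rfl (fun j _ => hpσ j)
        _ = ∑ j ∈ Finset.univ.filter (fun j : Fin n => (j : ℕ) < r), (1:ℝ) :=
            (Finset.sum_filter (fun j : Fin n => (j : ℕ) < r) (fun _ => (1:ℝ))).symm
        _ = (r : ℝ) := by
            rw [Finset.sum_const, card_filter_lt hr, nsmul_eq_mul, mul_one]
    have hLHS : ∑ j ∈ Finset.univ.filter (fun j : Fin n => (j : ℕ) < r),
        descSort hH3.eigenvalues j = ∑ k, p k * d k ^ 3 := by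
      rw [hdesc3, descSort_cube, ← hσ]
      have h1 : ∑ k, p k * d k ^ 3 = ∑ j, p (σ j) * d (σ j) ^ 3 :=
        (Equiv.sum_comp σ (fun k => p k * d k ^ 3)).symm
      rw [h1, Finset.sum_filter]
      apply Finset.sum_congr rfl
      intro j _
      rw [hpσ j]
      by_cases hj : (j : ℕ) < r
      · rw [if_pos hj, if_pos hj, one_mul]
      · rw [if_neg hj, if_neg hj, zero_mul]
    set s : Fin n → ℝ := fun i => ∑ k, p k * Complex.normSq (W k i) with hs
    have hs0 : ∀ i, 0 ≤ s i := by
      intro i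
      apply Finset.sum_nonneg
      intro k _
      exact mul_nonneg (hp01 k).1 (Complex.normSq_nonneg _)
    have hs1 : ∀ i, s i ≤ 1 := by
      intro i
      calc s i ≤ ∑ k, Complex.normSq (W k i) := by
            apply Finset.sum_le_sum
            intro k _
            exact mul_le_of_le_one_left (Complex.normSq_nonneg _) (hp01 k).2
        _ = 1 := hcol i
    have hssum : ∑ i, s i = (r : ℝ) := by
      calc ∑ i, s i = ∑ k, ∑ i, p k * Complex.normSq (W k i) := Finset.sum_comm
        _ = ∑ k, p k := by
            apply Finset.sum_congr rfl
            intro k _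
            rw [← Finset.mul_sum, hrow, mul_one]
        _ = (r : ℝ) := hpsum
    have hswap : ∑ i, μ i * s i = ∑ k, p k * (∑ i, μ i * Complex.normSq (W k i)) := by
      calc ∑ i, μ i * s i = ∑ i, ∑ k, μ i * (p k * Complex.normSq (W k i)) := by
            apply Finset.sum_congr rfl
            intro i _
            rw [Finset.mul_sum]
        _ = ∑ k, ∑ i, μ i * (p k * Complex.normSq (W k i)) := Finset.sum_comm
        _ = ∑ k, p k * (∑ i, μ i * Complex.normSq (W k i)) := by
            apply Finset.sum_congr rfl
            intro k _
            rw [Finset.mul_sum]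
            apply Finset.sum_congr rfl
            intro i _
            ring
    have hchain : ∑ k, p k * d k ^ 3 ≤ ∑ i, μ i * s i := by
      rw [hswap]
      have h1 : ∑ k, p k * (∑ i, μ i * Complex.normSq (W k i))
          = ∑ k, p k * d k ^ 3
            + ∑ k, ∑ j, p k * (2 * Complex.normSq (X k j) * (d k - d j)) := by
        rw [← Finset.sum_add_distrib]
        apply Finset.sum_congr rfl
        intro k _
        rw [hreal k, mul_add, Finset.mul_sum]
      have hswap2 : ∑ k, ∑ j, p k * (2 * Complex.normSq (X k j) * (d k - d j))
          = ∑ k, ∑ j, p j * (2 * Complex.normSq (X k j) * (d j - d k)) := by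
        rw [Finset.sum_comm]
        apply Finset.sum_congr rfl
        intro k _
        apply Finset.sum_congr rfl
        intro j _
        rw [hXsym j k]
      have hS : ∑ k, ∑ j, p k * (2 * Complex.normSq (X k j) * (d k - d j))
            + ∑ k, ∑ j, p j * (2 * Complex.normSq (X k j) * (d j - d k))
          = ∑ k, ∑ j, (p k - p j) * (d k - d j) * (2 * Complex.normSq (X k j)) := by
        rw [← Finset.sum_add_distrib]
        apply Finset.sum_congr rfl
        intro k _
        rw [← Finset.sum_add_distrib]
        apply Finset.sum_congr rfl
        intro j _
        ring
      have hpos : 0 ≤ ∑ k, ∑ j, (p k - p j) * (d k - d j) * (2 * Complex.normSq (X k j)) :=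
        Finset.sum_nonneg (fun k _ => Finset.sum_nonneg (fun j _ =>
          mul_nonneg (hpmono k j) (mul_nonneg (by norm_num) (Complex.normSq_nonneg _))))
      linarith
    set τ := Tuple.sort (fun i => -(μ i)) with hτ
    have hμs : ∑ i, μ i * s i = ∑ j, descSort μ j * s (τ j) :=
      (Equiv.sum_comp τ (fun i => μ i * s i)).symm
    have hτsum : ∑ j, s (τ j) = (r : ℝ) := (Equiv.sum_comp τ s).trans hssum
    have hkf := kyfan_scalar hr (descSort μ) (fun j => s (τ j)) (descSort_antitone μ)
      (fun j => hs0 _) (fun j => hs1 _) hτsum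
    calc ∑ j ∈ Finset.univ.filter (fun j : Fin n => (j : ℕ) < r), descSort hH3.eigenvalues j
        = ∑ k, p k * d k ^ 3 := hLHS
      _ ≤ ∑ i, μ i * s i := hchain
      _ = ∑ j, descSort μ j * s (τ j) := hμs
      _ ≤ ∑ j ∈ Finset.univ.filter (fun j : Fin n => (j : ℕ) < r), descSort μ j := hkf
  · -- total sums
    rw [hdesc3, descSort_sum, descSort_sum, htot]
end

section
/- Let A, B be n×n Hermitian matrices, H = A + B, X = A - B, Q₄ = A⁴ + 4A³B + 6A²B² + 4AB³ + B⁴, and R₄ = (Q₄ + Q₄*)/2. Then R₄ - H⁴ = (1/2)[X,[X,H²]] - (1/4)[X,H]². -/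
open Matrix BigOperators
open scoped ComplexOrder

/-- The quartic identity `R₄ - H⁴ = (1/2)[X,[X,H²]] - (1/4)[X,H]²`. -/
theorem quartic_commutator_identity {n : ℕ} (A B : Matrix (Fin n) (Fin n) ℂ)
    (hA : A.IsHermitian) (hB : B.IsHermitian) :
    (1 / 2 : ℂ) • ((A ^ 4 + (4 : ℂ) • (A ^ 3 * B) + (6 : ℂ) • (A ^ 2 * B ^ 2)
          + (4 : ℂ) • (A * B ^ 3) + B ^ 4)
        + (A ^ 4 + (4 : ℂ) • (A ^ 3 * B) + (6 : ℂ) • (A ^ 2 * B ^ 2)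
          + (4 : ℂ) • (A * B ^ 3) + B ^ 4)ᴴ)
      - (A + B) ^ 4
    = (1 / 2 : ℂ) •
        ((A - B) * ((A - B) * (A + B) ^ 2 - (A + B) ^ 2 * (A - B))
          - ((A - B) * (A + B) ^ 2 - (A + B) ^ 2 * (A - B)) * (A - B))
      - (1 / 4 : ℂ) •
        (((A - B) * (A + B) - (A + B) * (A - B)) *
          ((A - B) * (A + B) - (A + B) * (A - B))) := by
  simp only [conjTranspose_add, conjTranspose_smul, conjTranspose_mul,
    conjTranspose_pow, hA.eq, hB.eq, Complex.star_def, map_ofNat]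
  simp only [show (4:ℕ)=3+1 from rfl, show (3:ℕ)=2+1 from rfl, show (2:ℕ)=1+1 from rfl,
    pow_succ, pow_one]
  simp only [add_mul, mul_add, sub_mul, mul_sub, smul_mul_assoc, mul_smul_comm,
    smul_smul, smul_add, smul_sub, mul_assoc, pow_zero, one_mul]
  match_scalars <;> norm_num
end

section
/- Let A, B be n×n Hermitian matrices, H = A + B, X = A - B, and E an orthogonal projection whose range is spanned by eigenvectors of H² associated with its r largest eigenvalues. Then Tr(E((1/2)[X,[X,H²]] - (1/4)[X,H]²)) ≥ 0. -/
open Matrix BigOperators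
open scoped ComplexOrder

/-- Scalar identity used for the per-entry computation. -/
private lemma auxterm (y z : ℂ) (a b : ℝ) :
    (1/2 : ℂ) * (y * (star y * (a:ℂ) - (b:ℂ) * star y))
      - (1/2 : ℂ) * ((y * (b:ℂ) - (a:ℂ) * y) * star y)
      - (1/4 : ℂ) * (z * (-star z))
    = ((Complex.normSq y * (a - b) + (1/4) * Complex.normSq z : ℝ) : ℂ) := by
  have hy : ((Complex.normSq y : ℝ) : ℂ) = y * star y := by
    rw [Complex.star_def]; exact (Complex.mul_conj y).symm
  have hz : ((Complex.normSq z : ℝ) : ℂ) = z * star z := by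
    rw [Complex.star_def]; exact (Complex.mul_conj z).symm
  push_cast
  rw [hy, hz]
  ring

/-- If `E` is a spectral projection of `H²` for its `r` largest eigenvalues, then
`Tr(E((1/2)[X,[X,H²]] - (1/4)[X,H]²)) ≥ 0`, where `H = A + B`, `X = A - B`. -/
theorem trace_proj_quartic_test_nonneg {n r : ℕ} (A B : Matrix (Fin n) (Fin n) ℂ)
    (hA : A.IsHermitian) (hB : B.IsHermitian)
    (hH2 : ((A + B) ^ 2).IsHermitian)
    (s : Finset (Fin n)) (hs : s.card = r)
    (hmax : ∀ i ∈ s, ∀ j ∉ s, hH2.eigenvalues j ≤ hH2.eigenvalues i) :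
    0 ≤ (Matrix.trace (specProj hH2 s *
        ((1 / 2 : ℂ) •
          ((A - B) * ((A - B) * (A + B) ^ 2 - (A + B) ^ 2 * (A - B))
            - ((A - B) * (A + B) ^ 2 - (A + B) ^ 2 * (A - B)) * (A - B))
        - (1 / 4 : ℂ) •
          (((A - B) * (A + B) - (A + B) * (A - B)) *
            ((A - B) * (A + B) - (A + B) * (A - B)))))).re := by
  classical
  set X : Matrix (Fin n) (Fin n) ℂ := A - B with hXdef
  set H : Matrix (Fin n) (Fin n) ℂ := A + B with hHdef
  set U : Matrix (Fin n) (Fin n) ℂ := (hH2.eigenvectorUnitary : Matrix (Fin n) (Fin n) ℂ)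
    with hUdef
  set ev : Fin n → ℝ := hH2.eigenvalues with hevdef
  have hUU' : U * Uᴴ = 1 := by
    have := (Matrix.mem_unitaryGroup_iff).mp hH2.eigenvectorUnitary.2
    simpa only [Matrix.star_eq_conjTranspose] using this
  -- the diagonalization
  set D : Matrix (Fin n) (Fin n) ℂ := Matrix.diagonal (fun i => ((ev i : ℝ) : ℂ)) with hDdef
  have hDD : Uᴴ * H ^ 2 * U = D := by
    have h := hH2.conjStarAlgAut_star_eigenvectorUnitary
    rw [Unitary.conjStarAlgAut_star_apply, Matrix.star_eq_conjTranspose] at h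
    exact h
  -- conjugation is multiplicative
  have hmul : ∀ M N : Matrix (Fin n) (Fin n) ℂ,
      Uᴴ * (M * N) * U = (Uᴴ * M * U) * (Uᴴ * N * U) := by
    intro M N
    calc Uᴴ * (M * N) * U = Uᴴ * M * (U * Uᴴ) * N * U := by rw [hUU']; noncomm_ring
    _ = (Uᴴ * M * U) * (Uᴴ * N * U) := by noncomm_ring
  have hsub : ∀ M N : Matrix (Fin n) (Fin n) ℂ,
      Uᴴ * (M - N) * U = Uᴴ * M * U - Uᴴ * N * U := by
    intro M N; noncomm_ring
  have hsmul : ∀ (c : ℂ) (M : Matrix (Fin n) (Fin n) ℂ),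
      Uᴴ * (c • M) * U = c • (Uᴴ * M * U) := by
    intro c M; rw [Matrix.mul_smul, Matrix.smul_mul]
  set Y : Matrix (Fin n) (Fin n) ℂ := Uᴴ * X * U with hYdef
  set G : Matrix (Fin n) (Fin n) ℂ := Uᴴ * H * U with hGdef
  set Z : Matrix (Fin n) (Fin n) ℂ := Y * G - G * Y with hZdef
  clear_value Z
  clear_value Y G
  -- hermitian facts
  have hYY : Yᴴ = Y := by
    rw [hYdef]
    calc (Uᴴ * X * U)ᴴ = Uᴴ * Xᴴ * U := by
          simp [Matrix.conjTranspose_mul, Matrix.mul_assoc]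
    _ = Uᴴ * X * U := by rw [(hA.sub hB : Xᴴ = X)]
  have hGG : Gᴴ = G := by
    rw [hGdef]
    calc (Uᴴ * H * U)ᴴ = Uᴴ * Hᴴ * U := by
          simp [Matrix.conjTranspose_mul, Matrix.mul_assoc]
    _ = Uᴴ * H * U := by rw [(hA.add hB : Hᴴ = H)]
  have hZZ : Zᴴ = -Z := by
    rw [hZdef, Matrix.conjTranspose_sub, Matrix.conjTranspose_mul, Matrix.conjTranspose_mul,
      hYY, hGG, neg_sub]
  have hYsym : ∀ i k, Y k i = star (Y i k) := by
    intro i k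
    conv_lhs => rw [← hYY]
    rw [Matrix.conjTranspose_apply]
  have hZsym : ∀ i k, Z k i = -star (Z i k) := by
    intro i k
    have h := congrFun (congrFun hZZ k) i
    rw [Matrix.conjTranspose_apply, Matrix.neg_apply] at h
    rw [h, neg_neg]
  -- conjugate the big expression
  have h1 : Uᴴ * (X * H ^ 2 - H ^ 2 * X) * U = Y * D - D * Y := by
    rw [hsub, hmul, hmul, hDD, ← hYdef]
  have h2 : Uᴴ * (X * H - H * X) * U = Z := by
    rw [hsub, hmul, hmul, ← hYdef, ← hGdef, ← hZdef]
  have hCconj : Uᴴ * ((1 / 2 : ℂ) •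
          (X * (X * H ^ 2 - H ^ 2 * X) - (X * H ^ 2 - H ^ 2 * X) * X)
        - (1 / 4 : ℂ) • ((X * H - H * X) * (X * H - H * X))) * U
      = (1 / 2 : ℂ) • (Y * (Y * D - D * Y) - (Y * D - D * Y) * Y)
        - (1 / 4 : ℂ) • (Z * Z) := by
    rw [hsub, hsmul, hsmul, hsub, hmul, hmul, hmul, h1, h2, ← hYdef]
  -- move the trace to the eigenbasis
  set P : Matrix (Fin n) (Fin n) ℂ :=
    Matrix.diagonal (fun i => if i ∈ s then (1:ℂ) else 0) with hPdef
  have htr : Matrix.trace (specProj hH2 s *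
        ((1 / 2 : ℂ) •
          (X * (X * H ^ 2 - H ^ 2 * X) - (X * H ^ 2 - H ^ 2 * X) * X)
        - (1 / 4 : ℂ) • ((X * H - H * X) * (X * H - H * X))))
      = Matrix.trace (P * ((1 / 2 : ℂ) • (Y * (Y * D - D * Y) - (Y * D - D * Y) * Y)
          - (1 / 4 : ℂ) • (Z * Z))) := by
    rw [← hCconj]
    set M : Matrix (Fin n) (Fin n) ℂ := (1 / 2 : ℂ) •
          (X * (X * H ^ 2 - H ^ 2 * X) - (X * H ^ 2 - H ^ 2 * X) * X)
        - (1 / 4 : ℂ) • ((X * H - H * X) * (X * H - H * X)) with hMdef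
    show Matrix.trace (specProj hH2 s * M) = _
    rw [specProj, ← hUdef]
    calc Matrix.trace (U * P * Uᴴ * M) = Matrix.trace ((U * P) * (Uᴴ * M)) := by
          rw [Matrix.mul_assoc (U * P) Uᴴ M]
    _ = Matrix.trace ((Uᴴ * M) * (U * P)) := Matrix.trace_mul_comm _ _
    _ = Matrix.trace ((Uᴴ * M * U) * P) := by rw [← Matrix.mul_assoc (Uᴴ * M) U P]
    _ = Matrix.trace (P * (Uᴴ * M * U)) := Matrix.trace_mul_comm _ _
  rw [htr]
  -- compute the diagonal entries
  set fC : Matrix (Fin n) (Fin n) ℂ :=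
    (1 / 2 : ℂ) • (Y * (Y * D - D * Y) - (Y * D - D * Y) * Y) - (1 / 4 : ℂ) • (Z * Z)
    with hfCdef
  have hdiag : ∀ i, fC i i = ((∑ k, (Complex.normSq (Y i k) * (ev i - ev k)
      + (1/4) * Complex.normSq (Z i k)) : ℝ) : ℂ) := by
    intro i
    have e1 : (Y * (Y * D - D * Y)) i i
        = ∑ k, Y i k * (Y k i * ((ev i : ℝ) : ℂ) - ((ev k : ℝ) : ℂ) * Y k i) := by
      rw [Matrix.mul_apply]
      refine Finset.sum_congr rfl fun k _ => ?_
      rw [Matrix.sub_apply, hDdef, Matrix.mul_diagonal, Matrix.diagonal_mul]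
    have e2 : ((Y * D - D * Y) * Y) i i
        = ∑ k, (Y i k * ((ev k : ℝ) : ℂ) - ((ev i : ℝ) : ℂ) * Y i k) * Y k i := by
      rw [Matrix.mul_apply]
      refine Finset.sum_congr rfl fun k _ => ?_
      rw [Matrix.sub_apply, hDdef, Matrix.mul_diagonal, Matrix.diagonal_mul]
    have e3 : (Z * Z) i i = ∑ k, Z i k * (-star (Z i k)) := by
      rw [Matrix.mul_apply]
      refine Finset.sum_congr rfl fun k _ => ?_
      rw [hZsym i k]
    rw [hfCdef, Matrix.sub_apply, Matrix.smul_apply, Matrix.smul_apply, Matrix.sub_apply,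
      e1, e2, e3, smul_eq_mul, smul_eq_mul, mul_sub, Finset.mul_sum, Finset.mul_sum,
      Finset.mul_sum, ← Finset.sum_sub_distrib, ← Finset.sum_sub_distrib,
      Complex.ofReal_sum]
    refine Finset.sum_congr rfl fun k _ => ?_
    rw [hYsym i k]
    exact auxterm (Y i k) (Z i k) (ev i) (ev k)
  -- trace as a real double sum
  have htr2 : Matrix.trace (P * fC)
      = ((∑ i ∈ s, ∑ k, (Complex.normSq (Y i k) * (ev i - ev k)
          + (1/4) * Complex.normSq (Z i k)) : ℝ) : ℂ) := by
    rw [Matrix.trace]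
    have : ∀ i, (P * fC).diag i = (if i ∈ s then (1:ℂ) else 0) * fC i i := by
      intro i
      rw [Matrix.diag_apply, hPdef, Matrix.diagonal_mul]
    rw [Finset.sum_congr rfl fun i _ => this i]
    calc (∑ i, (if i ∈ s then (1:ℂ) else 0) * fC i i)
        = ∑ i, (if i ∈ s then fC i i else 0) := by
          refine Finset.sum_congr rfl fun i _ => ?_
          by_cases h : i ∈ s <;> simp [h]
    _ = ∑ i ∈ s, fC i i := by rw [Finset.sum_ite_mem, Finset.univ_inter]
    _ = _ := by
          rw [Complex.ofReal_sum]
          exact Finset.sum_congr rfl fun i _ => hdiag i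
  rw [htr2, Complex.ofReal_re]
  -- nonnegativity of the real double sum
  have hsplit : ∀ i, (∑ k, (Complex.normSq (Y i k) * (ev i - ev k)
        + (1/4) * Complex.normSq (Z i k)))
      = (∑ k ∈ s, (Complex.normSq (Y i k) * (ev i - ev k) + (1/4) * Complex.normSq (Z i k)))
      + (∑ k ∈ sᶜ, (Complex.normSq (Y i k) * (ev i - ev k)
          + (1/4) * Complex.normSq (Z i k))) := by
    intro i
    exact (Finset.sum_add_sum_compl s _).symm
  rw [Finset.sum_congr rfl fun i _ => hsplit i, Finset.sum_add_distrib]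
  have hpart2 : 0 ≤ ∑ i ∈ s, ∑ k ∈ sᶜ, (Complex.normSq (Y i k) * (ev i - ev k)
      + (1/4) * Complex.normSq (Z i k)) := by
    refine Finset.sum_nonneg fun i hi => Finset.sum_nonneg fun k hk => ?_
    have hk' : k ∉ s := Finset.mem_compl.mp hk
    have := hmax i hi k hk'
    have h1 : 0 ≤ Complex.normSq (Y i k) * (ev i - ev k) :=
      mul_nonneg (Complex.normSq_nonneg _) (by linarith)
    have h2 : 0 ≤ (1/4 : ℝ) * Complex.normSq (Z i k) := by
      have := Complex.normSq_nonneg (Z i k); linarith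
    linarith
  have hqsym : ∀ i k, Complex.normSq (Y i k) = Complex.normSq (Y k i) := by
    intro i k
    rw [hYsym i k, Complex.star_def, Complex.normSq_conj]
  have hpart1 : 0 ≤ ∑ i ∈ s, ∑ k ∈ s, (Complex.normSq (Y i k) * (ev i - ev k)
      + (1/4) * Complex.normSq (Z i k)) := by
    rw [Finset.sum_congr rfl fun i (_ : i ∈ s) =>
      (Finset.sum_add_distrib (s := s)
        (f := fun k => Complex.normSq (Y i k) * (ev i - ev k))
        (g := fun k => (1/4) * Complex.normSq (Z i k))), Finset.sum_add_distrib]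
    have hzero : (∑ i ∈ s, ∑ k ∈ s, Complex.normSq (Y i k) * (ev i - ev k)) = 0 := by
      have hneg : (∑ i ∈ s, ∑ k ∈ s, Complex.normSq (Y i k) * (ev i - ev k))
          = -(∑ i ∈ s, ∑ k ∈ s, Complex.normSq (Y i k) * (ev i - ev k)) := by
        conv_lhs => rw [Finset.sum_comm]
        rw [← Finset.sum_neg_distrib]
        refine Finset.sum_congr rfl fun k _ => ?_
        rw [← Finset.sum_neg_distrib]
        refine Finset.sum_congr rfl fun i _ => ?_
        rw [hqsym i k]
        ring
      linarith
    rw [hzero, zero_add]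
    refine Finset.sum_nonneg fun i _ => Finset.sum_nonneg fun k _ => ?_
    have := Complex.normSq_nonneg (Z i k); linarith
  linarith
end
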